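/- Soundness of transducer composition: for transducers T : A+B and T' : B+C, ⟦T ; T'⟧ = ⟦T⟧ ; ⟦T'⟧, where composition of trace sets is θ ; θ' = { t ∈ 𝒫(A+C)* | ∃u ∈ θ ∥ θ'. u↾(A+C) = t }. -/

import Mathlib

/-- A transducer over label alphabet `A`: rounds are subsets of `A`. -/
structure Transducer (A : Type) where
  S : Type
  init : S
  delta : S → Set A → S → Prop

/-- Extension of the transition relation to traces (sequences of rounds). -/
inductive ExtDelta {A : Type} (T : Transducer A) : T.S → List (Set A) → T.S → Prop
  | nil (q : T.S) : ExtDelta T q [] q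
  | snoc {s s'' s' : T.S} {t : List (Set A)} {V : Set A} :
      ExtDelta T s t s'' → T.delta s'' V s' → ExtDelta T s (t ++ [V]) s'

/-- The trace set of a transducer. -/
def traces {A : Type} (T : Transducer A) : Set (List (Set A)) :=
  {t | ∃ s, ExtDelta T T.init t s}

/-- Intersection (synchronized product) of transducers. -/
def inter {A : Type} (T T' : Transducer A) : Transducer A where
  S := T.S × T'.S
  init := (T.init, T'.init)
  delta := fun p V q => T.delta p.1 V q.1 ∧ T'.delta p.2 V q.2

/-- Witness traces reaching a state. -/
def witnessSet {A : Type} (T : Transducer A) (s : T.S) : Set (List (Set A)) :=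
  {t | t ∈ traces T ∧ ExtDelta T T.init t s}

/-- Projection of a trace onto a sub-signature `X`. -/
def projTrace {L : Type} (X : Set L) (t : List (Set L)) : List (Set L) :=
  t.map (fun V => V ∩ X)

/-- Interaction (synchronization on projected rounds) of transducers with
signatures `X` and `Y`. -/
def interactT {L : Type} (X Y : Set L) (T T' : Transducer L) : Transducer L where
  S := T.S × T'.S
  init := (T.init, T'.init)
  delta := fun p V q => V ⊆ X ∪ Y ∧ T.delta p.1 (V ∩ X) q.1 ∧ T'.delta p.2 (V ∩ Y) q.2

/-- Projection of a transducer onto sub-signature `X`. -/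
def projT {L : Type} (X : Set L) (T : Transducer L) : Transducer L where
  S := T.S
  init := T.init
  delta := fun s V s' => ∃ W, V = W ∩ X ∧ T.delta s W s'

/-- Interaction of trace sets over signatures `X` and `Y`. -/
def interactSet {L : Type} (X Y : Set L) (θ θ' : Set (List (Set L))) :
    Set (List (Set L)) :=
  {t | (∀ V ∈ t, V ⊆ X ∪ Y) ∧ projTrace X t ∈ θ ∧ projTrace Y t ∈ θ'}

/-- Composition of a transducer over `A+B` with one over `B+C`. -/
def composeT {L : Type} (A B C : Set L) (T T' : Transducer L) : Transducer L :=
  projT (A ∪ C) (interactT (A ∪ B) (B ∪ C) T T')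

lemma projTrace_append {L : Type} (X : Set L) (t u : List (Set L)) :
    projTrace X (t ++ u) = projTrace X t ++ projTrace X u := List.map_append

lemma ExtDelta_nil_inv {A : Type} {T : Transducer A} {s s' : T.S}
    (h : ExtDelta T s [] s') : s' = s := by
  generalize hx : ([] : List (Set A)) = l at h
  cases h with
  | nil => rfl
  | snoc h1 h2 => exact absurd hx (by simp)

lemma ExtDelta_snoc_inv {A : Type} {T : Transducer A} {s s' : T.S}
    {u : List (Set A)} {W : Set A} (h : ExtDelta T s (u ++ [W]) s') :
    ∃ m, ExtDelta T s u m ∧ T.delta m W s' := by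
  generalize hx : u ++ [W] = l at h
  cases h with
  | nil => exact absurd hx (by simp)
  | snoc h1 h2 =>
    obtain ⟨h3, h4⟩ := List.append_inj' hx rfl
    subst h3
    obtain rfl : W = _ := by simpa using h4
    exact ⟨_, h1, h2⟩

lemma ExtDelta_map {A : Type} {T₁ T₂ : Transducer A} {f : T₁.S → T₂.S}
    {g : Set A → Set A}
    (hsim : ∀ s V s', T₁.delta s V s' → T₂.delta (f s) (g V) (f s'))
    {s s' : T₁.S} {t : List (Set A)} (h : ExtDelta T₁ s t s') :
    ExtDelta T₂ (f s) (t.map g) (f s') := by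
  induction h with
  | nil => exact ExtDelta.nil _
  | snoc h1 h2 ih =>
    rw [List.map_append]
    exact ExtDelta.snoc ih (hsim _ _ _ h2)

lemma projT_ext {L : Type} (X : Set L) (T : Transducer L)
    (s s' : (projT X T).S) (t : List (Set L)) :
    ExtDelta (projT X T) s t s' ↔ ∃ u, projTrace X u = t ∧ ExtDelta T s u s' := by
  constructor
  · intro h
    induction t using List.reverseRecOn generalizing s' with
    | nil =>
      obtain rfl := ExtDelta_nil_inv h
      exact ⟨[], rfl, ExtDelta.nil _⟩
    | append_singleton t V ih =>
      obtain ⟨m, h1, W, rfl, h2⟩ := ExtDelta_snoc_inv h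
      obtain ⟨u, rfl, he⟩ := ih m h1
      exact ⟨u ++ [W], projTrace_append .., ExtDelta.snoc he h2⟩
  · rintro ⟨u, rfl, he⟩
    exact ExtDelta_map (T₁ := T) (T₂ := projT X T) (f := id) (g := fun V => V ∩ X)
      (fun s V s' hd => ⟨V, rfl, hd⟩) he

lemma interactT_ext {L : Type} (X Y : Set L) (T T' : Transducer L)
    (p q : (interactT X Y T T').S) (t : List (Set L)) :
    ExtDelta (interactT X Y T T') p t q ↔
      (∀ V ∈ t, V ⊆ X ∪ Y) ∧ ExtDelta T p.1 (projTrace X t) q.1 ∧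
        ExtDelta T' p.2 (projTrace Y t) q.2 := by
  constructor
  · intro h
    refine ⟨?_, ?_, ?_⟩
    · intro V hV
      induction t using List.reverseRecOn generalizing q with
      | nil => simp at hV
      | append_singleton t W ih =>
        obtain ⟨m, h1, h2⟩ := ExtDelta_snoc_inv h
        rcases List.mem_append.mp hV with hm | hm
        · exact ih m h1 hm
        · simp at hm; subst hm; exact h2.1
    · exact ExtDelta_map (T₁ := interactT X Y T T') (f := Prod.fst)
        (g := fun V => V ∩ X) (fun s V s' hd => hd.2.1) h
    · exact ExtDelta_map (T₁ := interactT X Y T T') (f := Prod.snd)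
        (g := fun V => V ∩ Y) (fun s V s' hd => hd.2.2) h
  · rintro ⟨hsub, he1, he2⟩
    obtain ⟨q1, q2⟩ := q
    induction t using List.reverseRecOn generalizing q1 q2 with
    | nil =>
      obtain rfl := ExtDelta_nil_inv he1
      obtain rfl := ExtDelta_nil_inv he2
      exact ExtDelta.nil _
    | append_singleton t V ih =>
      rw [projTrace_append] at he1 he2
      obtain ⟨m1, hm1, hd1⟩ := ExtDelta_snoc_inv he1
      obtain ⟨m2, hm2, hd2⟩ := ExtDelta_snoc_inv he2
      have hmid : ExtDelta (interactT X Y T T') p t (m1, m2) :=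
        ih (fun V hV => hsub V (List.mem_append_left _ hV)) m1 m2 hm1 hm2
      exact ExtDelta.snoc hmid ⟨hsub V (by simp), hd1, hd2⟩

theorem compose_traces {L : Type} (A B C : Set L) (T T' : Transducer L) :
    traces (composeT A B C T T')
      = {t | ∃ u ∈ interactSet (A ∪ B) (B ∪ C) (traces T) (traces T'),
              projTrace (A ∪ C) u = t} := by
  ext t
  simp only [traces, composeT, Set.mem_setOf_eq, interactSet]
  constructor
  · rintro ⟨s, hs⟩
    rw [projT_ext] at hs
    obtain ⟨u, hu, he⟩ := hs
    replace he := (interactT_ext _ _ _ _ _ _ _).mp he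
    exact ⟨u, ⟨he.1, ⟨_, he.2.1⟩, ⟨_, he.2.2⟩⟩, hu⟩
  · rintro ⟨u, ⟨hsub, ⟨s1, h1⟩, ⟨s2, h2⟩⟩, rfl⟩
    refine ⟨(s1, s2), ?_⟩
    refine (projT_ext _ _ _ _ _).mpr ?_
    exact ⟨u, rfl, (interactT_ext _ _ _ _ _ _ _).mpr ⟨hsub, h1, h2⟩⟩
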